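/- arXiv:math/9601217 — 4 statements merged into one kernel-verified Lean document; each statement's English description precedes it below -/
import Mathlib

section
/- Let V be a finite-dimensional real vector space and μ₁,…,μ_N ∈ V* spanning V*. If for some x ∈ ℝ^N the polyhedron P(x) = {v | μ_i(v) + x_i ≥ 0 for all i} is non-empty and bounded, then the convex cone {∑_{i=1}^N c_i μ_i | c_i ≥ 0} equals all of V*. -/
set_option linter.unusedSectionVars false
open scoped RealInnerProductSpace

section ConeLemmas

variable {E : Type*} [NormedAddCommGroup E] [InnerProductSpace ℝ E] [FiniteDimensional ℝ E]

/-- Conical combinations of `w` over a finset of indices. -/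
def coneSet {N : ℕ} (w : Fin N → E) (s : Finset (Fin N)) : Set E :=
  {y | ∃ c : Fin N → ℝ, (∀ i, 0 ≤ c i) ∧ y = ∑ i ∈ s, c i • w i}

lemma coneSet_mono {N : ℕ} (w : Fin N → E) {s t : Finset (Fin N)} (hst : s ⊆ t) :
    coneSet w s ⊆ coneSet w t := by
  classical
  rintro y ⟨c, hc, rfl⟩
  refine ⟨fun i => if i ∈ s then c i else 0, fun i => ?_, ?_⟩
  · by_cases h : i ∈ s <;> simp [h, hc i]
  · rw [show (∑ i ∈ t, (if i ∈ s then c i else 0) • w i)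
        = ∑ i ∈ t, (if i ∈ s then c i • w i else 0) from
      Finset.sum_congr rfl fun i _ => by split <;> simp]
    rw [Finset.sum_ite_mem, Finset.inter_eq_right.mpr hst]

lemma coneSet_caratheodory {N : ℕ} (w : Fin N → E) :
    ∀ (s : Finset (Fin N)) {y : E}, y ∈ coneSet w s →
      ∃ t, t ⊆ s ∧ LinearIndependent ℝ (fun i : t => w i) ∧ y ∈ coneSet w t := by
  classical
  intro s
  induction s using Finset.strongInduction with
  | _ s ih =>
    intro y hy
    by_cases hli : LinearIndependent ℝ (fun i : s => w i)
    · exact ⟨s, subset_rfl, hli, hy⟩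
    obtain ⟨c, hc0, rfl⟩ := hy
    obtain ⟨g, hg_sum, j, hj⟩ := Fintype.not_linearIndependent_iff.mp hli
    have key : ∃ d : Fin N → ℝ, (∀ i ∉ s, d i = 0) ∧
        (∑ i ∈ s, d i • w i = 0) ∧ ∃ i ∈ s, 0 < d i := by
      set d : Fin N → ℝ := fun i => if h : i ∈ s then g ⟨i, h⟩ else 0 with hd
      have hd_sum : ∑ i ∈ s, d i • w i = 0 := by
        rw [← Finset.sum_coe_sort s (fun i => d i • w i)]
        rw [show (∑ i : s, d (i : Fin N) • w (i : Fin N)) = ∑ i : s, g i • w (i : Fin N) from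
          Finset.sum_congr rfl (fun i _ => by simp [hd, i.2])]
        exact hg_sum
      have hdj : d (j : Fin N) = g j := by simp [hd, j.2]
      by_cases hpos : ∃ i ∈ s, 0 < d i
      · exact ⟨d, fun i hi => by simp [hd, hi], hd_sum, hpos⟩
      · refine ⟨-d, fun i hi => by simp [hd, hi], by
          simpa [neg_smul, ← Finset.sum_neg_distrib] using congrArg Neg.neg hd_sum, ?_⟩
        push_neg at hpos
        refine ⟨j, j.2, ?_⟩
        have h1 := hpos j j.2
        have h2 : d (j : Fin N) ≠ 0 := by rw [hdj]; exact hj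
        simp only [Pi.neg_apply]
        rcases lt_or_eq_of_le h1 with h | h
        · linarith
        · exact absurd h h2
    obtain ⟨d, hd_out, hd_sum, hpos⟩ := key
    set T := s.filter (fun i => 0 < d i) with hT
    have hTne : T.Nonempty := by
      obtain ⟨i, hi, hdi⟩ := hpos
      exact ⟨i, Finset.mem_filter.mpr ⟨hi, hdi⟩⟩
    obtain ⟨i₀, hi₀T, hmin⟩ := Finset.exists_min_image T (fun i => c i / d i) hTne
    have hi₀s : i₀ ∈ s := (Finset.mem_filter.mp hi₀T).1
    have hdi₀ : 0 < d i₀ := (Finset.mem_filter.mp hi₀T).2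
    set τ := c i₀ / d i₀ with hτ
    have hτ0 : 0 ≤ τ := div_nonneg (hc0 i₀) hdi₀.le
    set c' : Fin N → ℝ := fun i => c i - τ * d i with hc'
    have hc'0 : ∀ i, 0 ≤ c' i := by
      intro i
      by_cases his : i ∈ s
      · by_cases hdi : 0 < d i
        · simp only [hc']
          rw [sub_nonneg]
          calc τ * d i ≤ (c i / d i) * d i :=
                mul_le_mul_of_nonneg_right (hmin i (Finset.mem_filter.mpr ⟨his, hdi⟩)) hdi.le
            _ = c i := div_mul_cancel₀ _ hdi.ne'
        · push_neg at hdi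
          have h3 : τ * d i ≤ 0 := mul_nonpos_of_nonneg_of_nonpos hτ0 hdi
          simp only [hc']
          linarith [hc0 i]
      · simp [hc', hd_out i his, hc0 i]
    have hc'i₀ : c' i₀ = 0 := by
      simp only [hc', hτ]
      field_simp
      simp
    have hsum' : ∑ i ∈ s, c' i • w i = ∑ i ∈ s, c i • w i := by
      simp only [hc', sub_smul, mul_smul]
      rw [Finset.sum_sub_distrib, ← Finset.smul_sum, hd_sum, smul_zero, sub_zero]
    have hy' : (∑ i ∈ s, c i • w i) ∈ coneSet w (s.erase i₀) := by
      refine ⟨c', hc'0, ?_⟩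
      rw [← hsum']
      exact (Finset.sum_erase s (by rw [hc'i₀, zero_smul])).symm
    obtain ⟨t, hts, hli', hyt⟩ := ih (s.erase i₀) (Finset.erase_ssubset hi₀s) hy'
    exact ⟨t, hts.trans (Finset.erase_subset _ _), hli', hyt⟩

lemma isClosed_coneSet_of_indep {N : ℕ} (w : Fin N → E) (s : Finset (Fin N))
    (h : LinearIndependent ℝ (fun i : s => w i)) : IsClosed (coneSet w s) := by
  classical
  let f : (s → ℝ) →ₗ[ℝ] E :=
    { toFun := fun c => ∑ i : s, c i • w (i : Fin N)
      map_add' := by intro a b; simp [add_smul, Finset.sum_add_distrib]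
      map_smul' := by intro r a; simp [Finset.smul_sum, mul_smul] }
  have hker : LinearMap.ker f = ⊥ := by
    rw [LinearMap.ker_eq_bot']
    intro m hm
    funext i
    exact Fintype.linearIndependent_iff.mp h m hm i
  obtain ⟨K, hK, hanti⟩ := f.exists_antilipschitzWith hker
  have hu : UniformContinuous ⇑f := by
    rw [← LinearMap.coe_toContinuousLinearMap' f]
    exact (LinearMap.toContinuousLinearMap f).uniformContinuous
  have hemb := hanti.isClosedEmbedding hu
  have himg : coneSet w s = f '' {c : s → ℝ | ∀ i, 0 ≤ c i} := by
    ext y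
    constructor
    · rintro ⟨c, hc, rfl⟩
      refine ⟨fun i => c i, fun i => hc i, ?_⟩
      show (∑ i : s, c (i : Fin N) • w (i : Fin N)) = _
      rw [Finset.sum_coe_sort s (fun i => c i • w i)]
    · rintro ⟨c, hc, rfl⟩
      refine ⟨fun i => if h : i ∈ s then c ⟨i, h⟩ else 0, fun i => ?_, ?_⟩
      · by_cases h : i ∈ s
        · simpa [h] using hc ⟨i, h⟩
        · simp [h]
      · show f c = ∑ i ∈ s, (if h : i ∈ s then c ⟨i, h⟩ else 0) • w i
        rw [← Finset.sum_coe_sort s (fun i => (if h : i ∈ s then c ⟨i, h⟩ else 0) • w i)]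
        exact (Finset.sum_congr rfl (fun i _ => by simp [i.2])).symm
  rw [himg]
  apply hemb.isClosedMap
  have hset : {c : s → ℝ | ∀ i, 0 ≤ c i} = ⋂ i, {c : s → ℝ | 0 ≤ c i} := by
    ext; simp [Set.mem_iInter]
  rw [hset]
  exact isClosed_iInter fun i => isClosed_le continuous_const (continuous_apply i)

lemma isClosed_coneSet_univ {N : ℕ} (w : Fin N → E) :
    IsClosed (coneSet w Finset.univ) := by
  classical
  have heq : coneSet w Finset.univ =
      ⋃ (t : Finset (Fin N)) (_ : LinearIndependent ℝ (fun i : t => w i)), coneSet w t := by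
    apply Set.Subset.antisymm
    · intro y hy
      obtain ⟨t, _, hli, hyt⟩ := coneSet_caratheodory w Finset.univ hy
      exact Set.mem_iUnion.mpr ⟨t, Set.mem_iUnion.mpr ⟨hli, hyt⟩⟩
    · intro y hy
      obtain ⟨t, ht⟩ := Set.mem_iUnion.mp hy
      obtain ⟨hli, hyt⟩ := Set.mem_iUnion.mp ht
      exact coneSet_mono w (Finset.subset_univ t) hyt
  rw [heq]
  exact isClosed_iUnion_of_finite fun t =>
    isClosed_iUnion_of_finite fun hli => isClosed_coneSet_of_indep w t hli

lemma generator_mem_coneSet {N : ℕ} (w : Fin N → E) (i : Fin N) :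
    w i ∈ coneSet w Finset.univ := by
  classical
  refine ⟨fun j => if j = i then 1 else 0, fun j => by positivity, ?_⟩
  rw [show (∑ j, (if j = i then (1:ℝ) else 0) • w j)
      = ∑ j, (if j = i then w j else 0) from
    Finset.sum_congr rfl fun j _ => by split <;> simp]
  rw [Finset.sum_ite_eq' Finset.univ i w]
  simp

/-- Farkas' lemma: if `ψ` is not in the cone generated by the `w i`, there is a separating
vector. -/
lemma farkas {N : ℕ} (w : Fin N → E) (ψ : E) (hns : ψ ∉ coneSet w Finset.univ) :
    ∃ y : E, (∀ i, 0 ≤ ⟪w i, y⟫) ∧ ⟪ψ, y⟫ < 0 := by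
  classical
  let K : ConvexCone ℝ E :=
    { carrier := coneSet w Finset.univ
      smul_mem' := by
        rintro r hr y ⟨c, hc, rfl⟩
        refine ⟨fun i => r * c i, fun i => mul_nonneg hr.le (hc i), ?_⟩
        rw [Finset.smul_sum]
        exact Finset.sum_congr rfl fun i _ =>
          show r • c i • w i = (r * c i) • w i from smul_smul r (c i) (w i)
      add_mem' := by
        rintro y ⟨c, hc, rfl⟩ z ⟨c', hc', rfl⟩
        refine ⟨fun i => c i + c' i, fun i => add_nonneg (hc i) (hc' i), ?_⟩
        rw [← Finset.sum_add_distrib]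
        exact Finset.sum_congr rfl fun i _ => (add_smul (c i) (c' i) (w i)).symm }
  obtain ⟨y, hy1, hy2⟩ :=
    ProperCone.hyperplane_separation' (x₀ := ψ)
      ⟨K.toPointedCone ⟨fun _ => 0, fun _ => le_rfl, by simp⟩, isClosed_coneSet_univ w⟩ hns
  refine ⟨y, fun i => hy1 (w i) (generator_mem_coneSet w i), ?_⟩
  exact hy2

end ConeLemmas

/-- If the functionals `μ i` span the dual space and some polyhedron
`P(x)` is non-empty and bounded, then the non-negative span of the `μ i` is all of `V*`. -/
theorem polytope_nonneg_span_dual {V : Type*} [NormedAddCommGroup V] [NormedSpace ℝ V]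
    [FiniteDimensional ℝ V] {N : ℕ} (μ : Fin N → Module.Dual ℝ V)
    (hspan : Submodule.span ℝ (Set.range μ) = ⊤)
    (x : Fin N → ℝ) (P : Set V) (hP : P = {v : V | ∀ i, 0 ≤ μ i v + x i})
    (hne : P.Nonempty) (hbd : Bornology.IsBounded P) :
    {φ : Module.Dual ℝ V | ∃ c : Fin N → ℝ, (∀ i, 0 ≤ c i) ∧ φ = ∑ i, c i • μ i}
      = Set.univ := by
  classical
  let e : V ≃L[ℝ] EuclideanSpace ℝ (Fin (Module.finrank ℝ V)) := toEuclidean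
  let lift : Module.Dual ℝ V → EuclideanSpace ℝ (Fin (Module.finrank ℝ V)) := fun φ =>
    (InnerProductSpace.toDual ℝ _).symm
      (LinearMap.toContinuousLinearMap (φ.comp ((e.symm : EuclideanSpace ℝ (Fin (Module.finrank ℝ V)) →L[ℝ] V) : EuclideanSpace ℝ (Fin (Module.finrank ℝ V)) →ₗ[ℝ] V)))
  have hlift : ∀ (φ : Module.Dual ℝ V) (u : EuclideanSpace ℝ (Fin (Module.finrank ℝ V))),
      ⟪lift φ, u⟫ = φ (e.symm u) := by
    intro φ u
    simp only [lift, InnerProductSpace.toDual_symm_apply]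
    rfl
  set w : Fin N → EuclideanSpace ℝ (Fin (Module.finrank ℝ V)) := fun i => lift (μ i) with hwdef
  rw [Set.eq_univ_iff_forall]
  intro φ
  have hmem : lift φ ∈ coneSet w Finset.univ := by
    by_contra hns
    obtain ⟨y, hy1, hy2⟩ := farkas w (lift φ) hns
    set v : V := e.symm y with hv
    have hμv : ∀ i, 0 ≤ μ i v := fun i => by
      have h := hy1 i
      rwa [hlift (μ i) y] at h
    have hφv : φ v < 0 := by rwa [hlift φ y] at hy2
    have hvne : v ≠ 0 := by
      intro h
      rw [h, map_zero] at hφv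
      exact absurd hφv (lt_irrefl 0)
    obtain ⟨p, hp⟩ := hne
    have hray : ∀ t : ℝ, 0 ≤ t → p + t • v ∈ P := by
      intro t ht
      rw [hP]
      intro i
      have hpi : 0 ≤ μ i p + x i := by rw [hP] at hp; exact hp i
      have heq : μ i (p + t • v) + x i = (μ i p + x i) + t * μ i v := by
        simp only [map_add, map_smul, smul_eq_mul]; ring
      rw [heq]
      have := mul_nonneg ht (hμv i)
      linarith
    obtain ⟨R, hR⟩ := Bornology.IsBounded.exists_norm_le hbd
    have hvpos : 0 < ‖v‖ := norm_pos_iff.mpr hvne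
    set t := (R + ‖p‖ + 1) / ‖v‖ with htdef
    have hRp : ‖p‖ ≤ R := hR p hp
    have hpn : 0 ≤ ‖p‖ := norm_nonneg p
    have ht0 : 0 ≤ t := div_nonneg (by linarith) hvpos.le
    have h1 : ‖p + t • v‖ ≤ R := hR _ (hray t ht0)
    have h2 : t * ‖v‖ = R + ‖p‖ + 1 := div_mul_cancel₀ _ hvpos.ne'
    have h3 := norm_sub_le (p + t • v) p
    rw [add_sub_cancel_left, norm_smul, Real.norm_of_nonneg ht0, h2] at h3
    linarith
  obtain ⟨c, hc, hceq⟩ := hmem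
  refine ⟨c, hc, ?_⟩
  ext v
  have h1 : φ v = ⟪lift φ, e v⟫ := by rw [hlift]; simp
  rw [h1, hceq, sum_inner, LinearMap.sum_apply]
  refine Finset.sum_congr rfl fun i _ => ?_
  rw [real_inner_smul_left, hwdef]
  simp only [LinearMap.smul_apply, smul_eq_mul]
  rw [hlift (μ i) (e v)]
  simp
end

section
/- Let S be a linear subspace of a finite-dimensional real inner product space W, and H a hyperplane through 0 in W with S not contained in H. Then there is a constant κ > 0 (depending only on S and H) such that for every B > 0, any point within distance B of both S and H is within distance κ·B of S ∩ H. -/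
/-- If `S` is a subspace not contained in the hyperplane `H = ker l`,
there is `κ > 0` such that any point within distance `B` of both `S` and `H`
is within distance `κ·B` of `S ∩ H`. -/
theorem near_subspace_and_hyperplane_near_intersection
    {W : Type*} [NormedAddCommGroup W] [InnerProductSpace ℝ W] [FiniteDimensional ℝ W]
    (S : Submodule ℝ W) (l : Module.Dual ℝ W) (hl : l ≠ 0)
    (hSH : ¬ S ≤ LinearMap.ker l) :
    ∃ κ > (0 : ℝ), ∀ B > (0 : ℝ), ∀ x : W,
      Metric.infDist x (S : Set W) ≤ B →
      Metric.infDist x (LinearMap.ker l : Set W) ≤ B →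
      Metric.infDist x ((S ⊓ LinearMap.ker l : Submodule ℝ W) : Set W) ≤ κ * B := by
  obtain ⟨s, hsS, hls⟩ : ∃ s ∈ S, l s ≠ 0 := by
    by_contra h
    push_neg at h
    exact hSH fun y hy => LinearMap.mem_ker.mpr (h y hy)
  clear hSH hl
  set L : W →L[ℝ] ℝ := LinearMap.toContinuousLinearMap l with hL
  have hLx : ∀ y : W, l y = L y := fun y => rfl
  refine ⟨1 + 2 * ‖L‖ * ‖s‖ / |l s| + 1, by positivity, ?_⟩
  intro B hB x hxS hxH
  -- closest point on S
  have hScl : IsClosed (S : Set W) := S.closed_of_finiteDimensional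
  obtain ⟨p, hpS, hpd⟩ := hScl.exists_infDist_eq_dist ⟨0, S.zero_mem⟩ x
  have hdp : dist x p ≤ B := hpd ▸ hxS
  -- closest point on ker l
  have hKcl : IsClosed ((LinearMap.ker l : Submodule ℝ W) : Set W) :=
    (LinearMap.ker l).closed_of_finiteDimensional
  obtain ⟨h0, hh0, hh0d⟩ := hKcl.exists_infDist_eq_dist ⟨0, Submodule.zero_mem _⟩ x
  have hdh : dist x h0 ≤ B := hh0d ▸ hxH
  -- bound |l x|
  have hlx : |l x| ≤ ‖L‖ * B := by
    have : l x = l (x - h0) := by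
      have : l h0 = 0 := hh0
      simp [map_sub, this]
    rw [this, hLx]
    calc |L (x - h0)| = ‖L (x - h0)‖ := rfl
      _ ≤ ‖L‖ * ‖x - h0‖ := L.le_opNorm _
      _ ≤ ‖L‖ * B := by
          have : ‖x - h0‖ = dist x h0 := (dist_eq_norm x h0).symm
          nlinarith [norm_nonneg L, dist_nonneg (x := x) (y := h0)]
  -- bound |l p|
  have hlp : |l p| ≤ 2 * ‖L‖ * B := by
    have h1 : |l p - l x| ≤ ‖L‖ * B := by
      have : l p - l x = L (p - x) := by simp [hLx, map_sub]
      rw [this]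
      calc |L (p - x)| ≤ ‖L‖ * ‖p - x‖ := L.le_opNorm _
        _ ≤ ‖L‖ * B := by
            have : ‖p - x‖ = dist x p := by rw [dist_comm, dist_eq_norm]
            nlinarith [norm_nonneg L, dist_nonneg (x := x) (y := p)]
    calc |l p| ≤ |l p - l x| + |l x| := by
          have := abs_add_le (l p - l x) (l x); simpa using this
      _ ≤ ‖L‖ * B + ‖L‖ * B := add_le_add h1 hlx
      _ = 2 * ‖L‖ * B := by ring
  -- corrected point
  set q : W := p - (l p / l s) • s with hq
  have hqmem : q ∈ (S ⊓ LinearMap.ker l : Submodule ℝ W) := by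
    constructor
    · exact S.sub_mem hpS (S.smul_mem _ hsS)
    · simp only [SetLike.mem_coe, LinearMap.mem_ker, hq, map_sub, map_smul, smul_eq_mul]
      field_simp
      ring
  have hdq : dist p q ≤ 2 * ‖L‖ * ‖s‖ / |l s| * B := by
    have : dist p q = |l p / l s| * ‖s‖ := by
      rw [hq, dist_eq_norm, sub_sub_cancel, norm_smul, Real.norm_eq_abs]
    rw [this, abs_div]
    have h2 : |l p| / |l s| * ‖s‖ = |l p| * ‖s‖ / |l s| := by ring
    have h3 : 2 * ‖L‖ * ‖s‖ / |l s| * B = 2 * ‖L‖ * B * ‖s‖ / |l s| := by ring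
    rw [h2, h3]
    have hls' : (0:ℝ) < |l s| := abs_pos.mpr hls
    apply div_le_div_of_nonneg_right ?_ hls'.le
    exact mul_le_mul_of_nonneg_right hlp (norm_nonneg s)
  calc Metric.infDist x ((S ⊓ LinearMap.ker l : Submodule ℝ W) : Set W) ≤ dist x q :=
        Metric.infDist_le_dist_of_mem hqmem
    _ ≤ dist x p + dist p q := dist_triangle x p q
    _ ≤ B + 2 * ‖L‖ * ‖s‖ / |l s| * B := add_le_add hdp hdq
    _ ≤ (1 + 2 * ‖L‖ * ‖s‖ / |l s| + 1) * B := by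
        have he : (1 + 2 * ‖L‖ * ‖s‖ / |l s| + 1) * B
            = B + 2 * ‖L‖ * ‖s‖ / |l s| * B + B := by ring
        rw [he]; linarith
end

section
/- Let A be a convex set in ℝ^n and S an affine subspace that intersects the affine span of A but does not intersect A. Then every point of A at minimal distance from S lies on the relative boundary of A (the boundary of A within its affine span). -/
/-- If an affine subspace `S` meets the affine span of a convex set `A`
but not `A` itself, then every point of `A` at minimal distance from `S` lies in the
relative (intrinsic) frontier of `A`. -/
theorem closest_point_on_relative_boundary {n : ℕ}
    (A : Set (EuclideanSpace ℝ (Fin n))) (hA : Convex ℝ A) (hAne : A.Nonempty)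
    (S : AffineSubspace ℝ (EuclideanSpace ℝ (Fin n)))
    (hSspan : ((S : Set (EuclideanSpace ℝ (Fin n))) ∩ (affineSpan ℝ A : Set (EuclideanSpace ℝ (Fin n)))).Nonempty)
    (hSA : (S : Set (EuclideanSpace ℝ (Fin n))) ∩ A = ∅)
    (a : EuclideanSpace ℝ (Fin n)) (ha : a ∈ A)
    (hmin : ∀ b ∈ A, Metric.infDist a (S : Set (EuclideanSpace ℝ (Fin n)))
      ≤ Metric.infDist b (S : Set (EuclideanSpace ℝ (Fin n)))) :
    a ∈ intrinsicFrontier ℝ A := by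
  classical
  obtain ⟨s, hsS, hs_span⟩ := hSspan
  have haS : a ∉ (S : Set (EuclideanSpace ℝ (Fin n))) := fun h =>
    Set.eq_empty_iff_forall_notMem.1 hSA a ⟨h, ha⟩
  have hSclosed : IsClosed (S : Set (EuclideanSpace ℝ (Fin n))) :=
    S.closed_of_finiteDimensional
  have hSne : (S : Set (EuclideanSpace ℝ (Fin n))).Nonempty := ⟨s, hsS⟩
  set d := Metric.infDist a (S : Set (EuclideanSpace ℝ (Fin n))) with hd_def
  have hd : 0 < d := by
    rcases lt_or_eq_of_le (Metric.infDist_nonneg :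
      0 ≤ Metric.infDist a (S : Set (EuclideanSpace ℝ (Fin n)))) with h | h
    · exact h
    · exact absurd (((hSclosed.mem_iff_infDist_zero hSne).2 h.symm)) haS
  -- the closest point of S to a
  obtain ⟨p, hpS, hpd⟩ := hSclosed.exists_infDist_eq_dist hSne a
  -- it suffices to show a is not in the intrinsic interior
  rw [← closure_diff_intrinsicInterior]
  refine ⟨subset_closure ha, fun hint => ?_⟩
  obtain ⟨x, hx_int, hx_eq⟩ := mem_intrinsicInterior.1 hint
  obtain ⟨ε, hε, hball⟩ := Metric.mem_nhds_iff.1 (mem_interior_iff_mem_nhds.1 hx_int)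
  have hsa : s ≠ a := fun h => haS (h ▸ hsS)
  have hdsa : 0 < dist s a := dist_pos.2 hsa
  -- choose a small parameter t
  set t : ℝ := min (1/2) (ε / (2 * dist s a)) with ht_def
  have ht0 : 0 < t := lt_min (by norm_num) (div_pos hε (by positivity))
  have ht1 : t < 1 := lt_of_le_of_lt (min_le_left _ _) (by norm_num)
  have htε : t * dist s a < ε := by
    calc t * dist s a ≤ (ε / (2 * dist s a)) * dist s a := by
          exact mul_le_mul_of_nonneg_right (min_le_right _ _) dist_nonneg
      _ = ε / 2 := by field_simp
      _ < ε := by linarith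
  -- the moved point
  set b : EuclideanSpace ℝ (Fin n) := (1 - t) • a + t • s with hb_def
  have ha_span : a ∈ affineSpan ℝ A := subset_affineSpan ℝ A ha
  have hb_span : b ∈ affineSpan ℝ A := by
    have := AffineSubspace.smul_vsub_vadd_mem (affineSpan ℝ A) t hs_span ha_span ha_span
    have hEq : t • (s -ᵥ a) +ᵥ a = b := by
      simp only [vsub_eq_sub, vadd_eq_add, hb_def, smul_sub, sub_smul, one_smul]
      abel
    rwa [hEq] at this
  have hdist_ba : dist b a < ε := by
    have : b - a = t • (s - a) := by
      simp only [hb_def, sub_smul, one_smul, smul_sub]; abel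
    rw [dist_eq_norm, this, norm_smul, Real.norm_eq_abs, abs_of_pos ht0]
    calc t * ‖s - a‖ = t * dist s a := by rw [dist_eq_norm]
      _ < ε := htε
  have hbA : b ∈ A := by
    have hbx : (⟨b, hb_span⟩ : affineSpan ℝ A) ∈ Metric.ball x ε := by
      rw [Metric.mem_ball, Subtype.dist_eq, hx_eq]
      exact hdist_ba
    exact hball hbx
  -- the comparison point in S
  set q : EuclideanSpace ℝ (Fin n) := (1 - t) • p + t • s with hq_def
  have hqS : q ∈ (S : Set (EuclideanSpace ℝ (Fin n))) := by
    have := AffineSubspace.smul_vsub_vadd_mem S t hsS hpS hpS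
    have hEq : t • (s -ᵥ p) +ᵥ p = q := by
      simp only [vsub_eq_sub, vadd_eq_add, hq_def, smul_sub, sub_smul, one_smul]
      abel
    rwa [hEq] at this
  have hdist_bq : dist b q = (1 - t) * d := by
    have : b - q = (1 - t) • (a - p) := by
      simp only [hb_def, hq_def, smul_sub]; abel
    rw [dist_eq_norm, this, norm_smul, Real.norm_eq_abs, abs_of_pos (by linarith)]
    rw [hd_def, hpd, dist_eq_norm]
  have hlt : Metric.infDist b (S : Set (EuclideanSpace ℝ (Fin n))) < d := by
    calc Metric.infDist b (S : Set (EuclideanSpace ℝ (Fin n))) ≤ dist b q :=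
          Metric.infDist_le_dist_of_mem hqS
      _ = (1 - t) * d := hdist_bq
      _ < 1 * d := by
          exact mul_lt_mul_of_pos_right (by linarith) hd
      _ = d := one_mul d
  exact absurd (hmin b hbA) (not_le.2 hlt)
end

section
/- Let f : ℝ → ℂ be a Schwartz function. Then for every c > 0 there is a constant C such that for all T ≥ 0, | ∫_0^T ∑_{n ∈ ℤ} f(e^x n) dx − (T f(0) + ∫_0^∞ ∑_{n ∈ ℤ, n ≠ 0} f(e^x n) dx) | ≤ C e^{−cT}; in particular ∫_0^T ∑_{n∈ℤ} f(e^x n) dx − T·f(0) converges as T → ∞ to ∫_0^∞ ∑_{n≠0} f(e^x n) dx. -/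
open scoped Topology
open MeasureTheory Set Filter

/-- Integral of `exp (-b x)` over `Ioi T`. -/
lemma truncTheta_integral_exp_neg_mul_Ioi {b : ℝ} (hb : 0 < b) (T : ℝ) :
    ∫ x in Set.Ioi T, Real.exp (-b * x) = Real.exp (-b * T) / b := by
  have hderiv : ∀ x ∈ Set.Ici T,
      HasDerivAt (fun y => -Real.exp (-b * y) / b) (Real.exp (-b * x)) x := by
    intro x _
    have h1 : HasDerivAt (fun y : ℝ => -b * y) (-b) x := by
      simpa using (hasDerivAt_id x).const_mul (-b)
    have h3 : HasDerivAt (fun y => -Real.exp (-b * y) / b) (-(Real.exp (-b * x) * -b) / b) x :=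
      (h1.exp.neg).div_const b
    convert h3 using 1
    field_simp
  have hint : IntegrableOn (fun x => Real.exp (-b * x)) (Set.Ioi T) :=
    exp_neg_integrableOn_Ioi T hb
  have htend : Tendsto (fun y => -Real.exp (-b * y) / b) atTop (𝓝 0) := by
    have h0 : Tendsto (fun y : ℝ => -b * y) atTop atBot :=
      tendsto_id.const_mul_atTop_of_neg (neg_neg_iff_pos.2 hb)
    have := ((Real.tendsto_exp_atBot.comp h0).neg).div_const b
    simpa using this
  have := integral_Ioi_of_hasDerivAt_of_tendsto' hderiv hint htend
  rw [this]; ring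

/-- Decay bound for a Schwartz function evaluated at `e^x n`. -/
lemma truncTheta_decay_bound (f : SchwartzMap ℝ ℂ) (k : ℕ) :
    ∃ C : ℝ, 0 ≤ C ∧ ∀ (x : ℝ) (n : ℤ), n ≠ 0 →
      ‖f (Real.exp x * (n : ℝ))‖ ≤ C * Real.exp (-(k : ℝ) * x) * (1 / |(n : ℝ)| ^ k) := by
  obtain ⟨C, hC⟩ := f.decay' k 0
  refine ⟨max C 0, le_max_right _ _, fun x n hn => ?_⟩
  have hn1 : (1 : ℝ) ≤ |(n : ℝ)| := by
    rw [← Int.cast_abs]; exact_mod_cast Int.one_le_abs hn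
  have hpos : (0 : ℝ) < Real.exp x * |(n : ℝ)| := by
    have := Real.exp_pos x; nlinarith
  have h1 := hC (Real.exp x * (n : ℝ))
  rw [norm_iteratedFDeriv_zero] at h1
  have hnorm : ‖(Real.exp x * (n : ℝ) : ℝ)‖ = Real.exp x * |(n : ℝ)| := by
    rw [Real.norm_eq_abs, abs_mul, abs_of_pos (Real.exp_pos x)]
  rw [hnorm] at h1
  have hrw : max C 0 * Real.exp (-(k : ℝ) * x) * (1 / |(n : ℝ)| ^ k)
      = max C 0 / (Real.exp x * |(n : ℝ)|) ^ k := by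
    rw [neg_mul, Real.exp_neg, Real.exp_nat_mul, mul_pow]
    field_simp
  rw [hrw, le_div_iff₀ (pow_pos hpos k)]
  calc ‖f (Real.exp x * (n : ℝ))‖ * (Real.exp x * |(n : ℝ)|) ^ k
      = (Real.exp x * |(n : ℝ)|) ^ k * ‖f (Real.exp x * (n : ℝ))‖ := by ring
    _ ≤ C := h1
    _ ≤ max C 0 := le_max_left _ _

lemma truncTheta_summable_pow (k : ℕ) (hk : 1 < k) :
    Summable (fun n : ℤ => 1 / |(n : ℝ)| ^ k) := by
  have h := (Real.summable_one_div_int_pow.mpr hk).abs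
  refine h.congr fun n => ?_
  simp [abs_inv, abs_pow]

/-- For a Schwartz function `f` on `ℝ`, the truncated integral
`∫_0^T ∑_{n∈ℤ} f(e^x n) dx` differs from `T·f(0) + ∫_0^∞ ∑_{n≠0} f(e^x n) dx` by
`O(e^{-cT})` for every `c > 0`; in particular it minus `T·f(0)` converges as `T → ∞`. -/
theorem truncated_theta_integral_positive_cone (f : SchwartzMap ℝ ℂ) :
    (∀ c > (0 : ℝ), ∃ C : ℝ, ∀ T : ℝ, 0 ≤ T →
      ‖(∫ x in (0 : ℝ)..T, ∑' n : ℤ, f (Real.exp x * (n : ℝ)))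
        - ((T : ℂ) * f 0
          + ∫ x in Set.Ioi (0 : ℝ),
              ∑' n : {m : ℤ // m ≠ 0}, f (Real.exp x * ((n : ℤ) : ℝ)))‖
        ≤ C * Real.exp (-c * T)) ∧
    Filter.Tendsto
      (fun T : ℝ =>
        (∫ x in (0 : ℝ)..T, ∑' n : ℤ, f (Real.exp x * (n : ℝ))) - (T : ℂ) * f 0)
      Filter.atTop
      (𝓝 (∫ x in Set.Ioi (0 : ℝ),
            ∑' n : {m : ℤ // m ≠ 0}, f (Real.exp x * ((n : ℤ) : ℝ)))) := by
  classical
  set g : ℝ → ℂ := fun x => ∑' n : {m : ℤ // m ≠ 0}, f (Real.exp x * ((n : ℤ) : ℝ)) with hgdef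
  -- key decay estimate for the nonzero-part sum
  have key : ∀ k : ℕ, 2 ≤ k → ∃ B : ℝ, 0 ≤ B ∧ ∀ x : ℝ,
      (Summable fun n : {m : ℤ // m ≠ 0} => ‖f (Real.exp x * ((n : ℤ) : ℝ))‖) ∧
      ‖g x‖ ≤ B * Real.exp (-(k : ℝ) * x) := by
    intro k hk
    obtain ⟨C, hC0, hCb⟩ := truncTheta_decay_bound f k
    have hS : Summable (fun n : ℤ => 1 / |(n : ℝ)| ^ k) :=
      truncTheta_summable_pow k (by omega)
    have hSsub : Summable (fun n : {m : ℤ // m ≠ 0} => 1 / |((n : ℤ) : ℝ)| ^ k) :=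
      hS.subtype {m : ℤ | m ≠ 0}
    set S : ℝ := ∑' n : {m : ℤ // m ≠ 0}, 1 / |((n : ℤ) : ℝ)| ^ k with hSdef
    have hS0 : 0 ≤ S := tsum_nonneg fun n => by positivity
    refine ⟨C * S, by positivity, fun x => ?_⟩
    have hb : ∀ n : {m : ℤ // m ≠ 0},
        ‖f (Real.exp x * ((n : ℤ) : ℝ))‖ ≤ C * Real.exp (-(k : ℝ) * x) * (1 / |((n : ℤ) : ℝ)| ^ k) :=
      fun n => hCb x n n.2
    have hmaj : Summable (fun n : {m : ℤ // m ≠ 0} =>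
        C * Real.exp (-(k : ℝ) * x) * (1 / |((n : ℤ) : ℝ)| ^ k)) := hSsub.mul_left _
    have hsumnorm : Summable fun n : {m : ℤ // m ≠ 0} => ‖f (Real.exp x * ((n : ℤ) : ℝ))‖ :=
      Summable.of_nonneg_of_le (fun n => norm_nonneg _) hb hmaj
    refine ⟨hsumnorm, ?_⟩
    calc ‖g x‖ ≤ ∑' n : {m : ℤ // m ≠ 0}, ‖f (Real.exp x * ((n : ℤ) : ℝ))‖ :=
          norm_tsum_le_tsum_norm hsumnorm
      _ ≤ ∑' n : {m : ℤ // m ≠ 0}, C * Real.exp (-(k : ℝ) * x) * (1 / |((n : ℤ) : ℝ)| ^ k) :=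
          Summable.tsum_le_tsum hb hsumnorm hmaj
      _ = C * Real.exp (-(k : ℝ) * x) * S := tsum_mul_left
      _ = C * S * Real.exp (-(k : ℝ) * x) := by ring
  obtain ⟨B₂, hB₂0, hB₂⟩ := key 2 le_rfl
  -- summability over all of ℤ
  have hgsum : ∀ x : ℝ, Summable fun n : {m : ℤ // m ≠ 0} => f (Real.exp x * ((n : ℤ) : ℝ)) :=
    fun x => ((hB₂ x).1).of_norm
  have hfull : ∀ x : ℝ, Summable fun n : ℤ => f (Real.exp x * (n : ℝ)) := by
    intro x
    have hfin : ({m : ℤ | m ≠ 0}ᶜ).Finite := by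
      have : ({m : ℤ | m ≠ 0}ᶜ : Set ℤ) = {0} := by ext m; simp
      rw [this]; exact Set.finite_singleton 0
    have h1 : Summable ((fun n : ℤ => f (Real.exp x * (n : ℝ))) ∘ ((↑) : {m : ℤ | m ≠ 0} → ℤ)) :=
      hgsum x
    have h2 : Summable ((fun n : ℤ => f (Real.exp x * (n : ℝ))) ∘ ((↑) : ↥({m : ℤ | m ≠ 0}ᶜ) → ℤ)) :=
      hfin.summable _
    exact summable_subtype_and_compl.mp ⟨h1, h2⟩
  -- splitting off the n = 0 term
  have hsplit : ∀ x : ℝ, (∑' n : ℤ, f (Real.exp x * (n : ℝ))) = f 0 + g x := by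
    intro x
    have h := (hfull x).tsum_subtype_add_tsum_subtype_compl ({0} : Set ℤ)
    rw [tsum_singleton (0 : ℤ) (fun m : ℤ => f (Real.exp x * (m : ℝ)))] at h
    rw [← h]
    congr 1
    norm_num
  -- continuity of g on Ici 0
  have hcont : ContinuousOn g (Set.Ici (0 : ℝ)) := by
    obtain ⟨C, hC0, hCb⟩ := truncTheta_decay_bound f 2
    have hSsub : Summable (fun n : {m : ℤ // m ≠ 0} => C * (1 / |((n : ℤ) : ℝ)| ^ 2)) :=
      ((truncTheta_summable_pow 2 one_lt_two).subtype {m : ℤ | m ≠ 0}).mul_left C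
    refine continuousOn_tsum (fun n => ?_) hSsub (fun n x hx => ?_)
    · exact (f.continuous.comp ((Real.continuous_exp).mul continuous_const)).continuousOn
    · have h1 := hCb x n n.2
      have h2 : Real.exp (-((2 : ℕ) : ℝ) * x) ≤ 1 := by
        rw [Real.exp_le_one_iff]
        have hx0 : (0 : ℝ) ≤ x := hx
        nlinarith
      calc ‖f (Real.exp x * ((n : ℤ) : ℝ))‖
          ≤ C * Real.exp (-((2 : ℕ) : ℝ) * x) * (1 / |((n : ℤ) : ℝ)| ^ 2) := h1
        _ ≤ C * 1 * (1 / |((n : ℤ) : ℝ)| ^ 2) := by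
            refine mul_le_mul_of_nonneg_right ?_ (by positivity)
            exact mul_le_mul_of_nonneg_left h2 hC0
        _ = C * (1 / |((n : ℤ) : ℝ)| ^ 2) := by ring
  have hmeasIoi : AEStronglyMeasurable g (volume.restrict (Set.Ioi (0 : ℝ))) :=
    (hcont.mono Set.Ioi_subset_Ici_self).aestronglyMeasurable measurableSet_Ioi
  have hIntIoi : IntegrableOn g (Set.Ioi (0 : ℝ)) := by
    refine Integrable.mono' (g := fun x => B₂ * Real.exp (-((2 : ℕ) : ℝ) * x)) ?_ hmeasIoi ?_
    · exact (exp_neg_integrableOn_Ioi 0 (by norm_num : (0 : ℝ) < ((2 : ℕ) : ℝ))).const_mul B₂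
    · exact ae_of_all _ fun x => (hB₂ x).2
  -- main estimate
  have main : ∀ c > (0 : ℝ), ∃ C : ℝ, ∀ T : ℝ, 0 ≤ T →
      ‖(∫ x in (0 : ℝ)..T, ∑' n : ℤ, f (Real.exp x * (n : ℝ)))
        - ((T : ℂ) * f 0 + ∫ x in Set.Ioi (0 : ℝ), g x)‖ ≤ C * Real.exp (-c * T) := by
    intro c hc
    set k : ℕ := max 2 ⌈c⌉₊ with hk
    have hk2 : 2 ≤ k := le_max_left _ _
    have hkc : c ≤ (k : ℝ) :=
      le_trans (Nat.le_ceil c) (by exact_mod_cast le_max_right 2 ⌈c⌉₊)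
    have hkpos : (0 : ℝ) < (k : ℝ) := by
      have : 0 < k := by omega
      exact_mod_cast this
    obtain ⟨B, hB0, hB⟩ := key k hk2
    refine ⟨B / (k : ℝ), fun T hT => ?_⟩
    have hIoc : IntegrableOn g (Set.Ioc 0 T) := hIntIoi.mono_set Set.Ioc_subset_Ioi_self
    have hIoiT : IntegrableOn g (Set.Ioi T) := hIntIoi.mono_set (Set.Ioi_subset_Ioi hT)
    have hsplitInt : (∫ x in Set.Ioi (0 : ℝ), g x)
        = (∫ x in Set.Ioc (0 : ℝ) T, g x) + ∫ x in Set.Ioi T, g x := by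
      rw [← Set.Ioc_union_Ioi_eq_Ioi hT]
      exact setIntegral_union (Set.Ioc_disjoint_Ioi le_rfl) measurableSet_Ioi hIoc hIoiT
    have hIval : (∫ x in (0 : ℝ)..T, ∑' n : ℤ, f (Real.exp x * (n : ℝ)))
        = (T : ℂ) * f 0 + ∫ x in Set.Ioc (0 : ℝ) T, g x := by
      rw [intervalIntegral.integral_of_le hT]
      calc (∫ x in Set.Ioc (0 : ℝ) T, ∑' n : ℤ, f (Real.exp x * (n : ℝ)))
          = ∫ x in Set.Ioc (0 : ℝ) T, (f 0 + g x) :=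
            setIntegral_congr_fun measurableSet_Ioc (fun x _ => hsplit x)
        _ = (∫ _x in Set.Ioc (0 : ℝ) T, (f 0 : ℂ)) + ∫ x in Set.Ioc (0 : ℝ) T, g x :=
            integral_add (integrableOn_const measure_Ioc_lt_top.ne) hIoc
        _ = (T : ℂ) * f 0 + ∫ x in Set.Ioc (0 : ℝ) T, g x := by
            rw [setIntegral_const]
            congr 1
            rw [Real.volume_real_Ioc_of_le hT, sub_zero, Complex.real_smul]
    rw [hIval, hsplitInt]
    have heq : (T : ℂ) * f 0 + (∫ x in Set.Ioc (0 : ℝ) T, g x)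
        - ((T : ℂ) * f 0 + ((∫ x in Set.Ioc (0 : ℝ) T, g x) + ∫ x in Set.Ioi T, g x))
        = -(∫ x in Set.Ioi T, g x) := by ring
    rw [heq, norm_neg]
    have hnormle : ‖∫ x in Set.Ioi T, g x‖ ≤ ∫ x in Set.Ioi T, B * Real.exp (-(k : ℝ) * x) := by
      refine norm_integral_le_of_norm_le
        ((exp_neg_integrableOn_Ioi T hkpos).const_mul B) (ae_of_all _ fun x => (hB x).2)
    have hval : (∫ x in Set.Ioi T, B * Real.exp (-(k : ℝ) * x))
        = B * (Real.exp (-(k : ℝ) * T) / (k : ℝ)) := by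
      rw [integral_const_mul, truncTheta_integral_exp_neg_mul_Ioi hkpos T]
    calc ‖∫ x in Set.Ioi T, g x‖ ≤ B * (Real.exp (-(k : ℝ) * T) / (k : ℝ)) := by
          rw [← hval]; exact hnormle
      _ = (B / (k : ℝ)) * Real.exp (-(k : ℝ) * T) := by ring
      _ ≤ (B / (k : ℝ)) * Real.exp (-c * T) := by
          refine mul_le_mul_of_nonneg_left ?_ (by positivity)
          exact Real.exp_le_exp.mpr (by nlinarith)
  refine ⟨main, ?_⟩
  obtain ⟨C, hC⟩ := main 1 one_pos
  have h2 : Tendsto (fun T : ℝ =>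
      ((∫ x in (0 : ℝ)..T, ∑' n : ℤ, f (Real.exp x * (n : ℝ))) - (T : ℂ) * f 0)
        - (∫ x in Set.Ioi (0 : ℝ), g x)) atTop (𝓝 0) := by
    refine squeeze_zero_norm' (a := fun T => C * Real.exp (-1 * T)) ?_ ?_
    · filter_upwards [eventually_ge_atTop (0 : ℝ)] with T hT
      rw [sub_sub]
      exact hC T hT
    · simpa [neg_one_mul] using Real.tendsto_exp_neg_atTop_nhds_zero.const_mul C
  exact tendsto_sub_nhds_zero_iff.mp h2
end
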